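/- Let α, λ, μ be rational numbers, let s assign a rational number s_I to each 4-element subset I of {1,…,7}, and let p_1,…,p_7 be rationals. If (s,p) is F-nef with parameters (α,λ,μ), then for every 3-element subset J of {1,…,7}: 12·c_J − 4α·∑_{i∈J} p_i + 3α·∑_{j∉J} p_j ≥ 0, where c_J = (1/3)·∑_{|I∩J|=2} s_I + μ·(p_1 + ⋯ + p_7) (the sum over I ranging over 4-element subsets of {1,…,7}). -/
import Mathlib


open Finset

/-- `(s, p)` is F-nef with parameters `(a, l, m)` (`α`, `λ`, `μ`): the value of the
divisor `D = ∑ s_I S_I + ∑ p_i P_i` on every F-curve of `M̄_{0,7}` is nonnegative,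
for the three combinatorial types `(1:1:1:4)`, `(1:1:2:3)`, `(1:2:2:2)` of partitions
`(A,B,C,D)` of the marked points. -/
def FNef (a l m : ℚ) (s : Finset (Fin 7) → ℚ) (p : Fin 7 → ℚ) : Prop :=
  ∀ A B C D : Finset (Fin 7),
    Disjoint A B → Disjoint A C → Disjoint A D →
    Disjoint B C → Disjoint B D → Disjoint C D →
    A ∪ B ∪ C ∪ D = univ →
    A.Nonempty → B.Nonempty → C.Nonempty → D.Nonempty →
    ((A.card = 1 ∧ B.card = 1 ∧ C.card = 1 ∧ D.card = 4 →
        0 ≤ (∑ I ∈ univ.filter (fun I : Finset (Fin 7) => I.card = 4 ∧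
                (I ∩ A).card = 1 ∧ (I ∩ B).card = 1 ∧ (I ∩ C).card = 1 ∧ (I ∩ D).card = 1),
              s I)
            + (2*a + 3*l - m) * (∑ i ∈ A ∪ B ∪ C, p i)
            + (3*l - m) * (∑ j ∈ D, p j)) ∧
     (A.card = 1 ∧ B.card = 1 ∧ C.card = 2 ∧ D.card = 3 →
        0 ≤ (∑ I ∈ univ.filter (fun I : Finset (Fin 7) => I.card = 4 ∧
                (I ∩ A).card = 1 ∧ (I ∩ B).card = 1 ∧ (I ∩ C).card = 1 ∧ (I ∩ D).card = 1),
              s I)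
            + (a + m) * (∑ i ∈ A ∪ B, p i)
            + (-a + m) * (∑ j ∈ C, p j)
            + m * (∑ k ∈ D, p k)) ∧
     (A.card = 1 ∧ B.card = 2 ∧ C.card = 2 ∧ D.card = 2 →
        0 ≤ (∑ I ∈ univ.filter (fun I : Finset (Fin 7) => I.card = 4 ∧
                (I ∩ A).card = 1 ∧ (I ∩ B).card = 1 ∧ (I ∩ C).card = 1 ∧ (I ∩ D).card = 1),
              s I)
            + 3*(m - l) * (∑ i ∈ A, p i)
            + (-a + 3*(m - l)) * (∑ j ∈ B ∪ C ∪ D, p j)))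

/-- The coefficient `c_J` of the boundary divisor `Δ_J` in the obvious representative of
`D = ∑ s_I S_I + ∑ p_i P_i`, for `J` of cardinality 2 or 3. -/
def cJ (a l m : ℚ) (s : Finset (Fin 7) → ℚ) (p : Fin 7 → ℚ) (J : Finset (Fin 7)) : ℚ :=
  if J.card = 2 then
    (1/3) * (∑ I ∈ univ.filter (fun I : Finset (Fin 7) => I.card = 4 ∧ J ⊆ I), s I)
      + (a + l) * (∑ i ∈ J, p i) + l * (∑ k ∈ Jᶜ, p k)
  else
    (1/3) * (∑ I ∈ univ.filter (fun I : Finset (Fin 7) => I.card = 4 ∧ (I ∩ J).card = 2), s I)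
      + m * (∑ k, p k)

/-- Summing the F-inequalities over the twelve F-curves of type `(1:1:2:3)` whose spine
tails of sizes 1 and 2 carry the labels of `J` gives
`12 c_J − 4α ∑_{i∈J} p_i + 3α ∑_{j∉J} p_j ≥ 0`. -/
theorem stmt7 (a l m : ℚ) (s : Finset (Fin 7) → ℚ) (p : Fin 7 → ℚ)
    (hF : FNef a l m s p) (J : Finset (Fin 7)) (hJ : J.card = 3) :
    0 ≤ 12 * cJ a l m s p J
        - 4*a * (∑ i ∈ J, p i)
        + 3*a * (∑ j ∈ Jᶜ, p j) := by
  have hK : Jᶜ.card = 4 := by rw [card_compl, hJ]; rfl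
  set F : Finset (Finset (Fin 7)) :=
    univ.filter (fun I : Finset (Fin 7) => I.card = 4 ∧ (I ∩ J).card = 2) with hFdef
  have hsing : ∀ (I : Finset (Fin 7)) (y : Fin 7), (I ∩ {y}).card = 1 ↔ y ∈ I := by
    intro I y
    by_cases h : y ∈ I
    · simp [inter_singleton_of_mem h, h]
    · simp [inter_singleton_of_notMem h, h]
  have hcompl : ∀ I : Finset (Fin 7), I.card = 4 → (I ∩ J).card = 2 → (I ∩ Jᶜ).card = 2 := by
    intro I h4 h2
    have h1 : I ∩ Jᶜ = I \ J := by rw [sdiff_eq]; rfl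
    have := card_inter_add_card_sdiff I J
    rw [h1]; omega
  have key : ∀ x ∈ J, ∀ b ∈ Jᶜ,
      0 ≤ (∑ I ∈ F, if x ∈ I ∧ b ∈ I then s I else 0)
          + (a + m) * (p x + p b)
          + (-a + m) * (∑ j ∈ J \ {x}, p j)
          + m * (∑ k ∈ Jᶜ \ {b}, p k) := by
    intro x hx b hb
    have hb' : b ∉ J := by simpa using hb
    have hxb : x ≠ b := fun h => hb' (h ▸ hx)
    have hsub : {x} ⊆ J := singleton_subset_iff.2 hx
    have hsub' : {b} ⊆ Jᶜ := singleton_subset_iff.2 hb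
    have hd1 : Disjoint ({x} : Finset (Fin 7)) {b} := by
      rw [disjoint_singleton]; exact hxb
    have hd2 : Disjoint ({x} : Finset (Fin 7)) (J \ {x}) := disjoint_sdiff
    have hd3 : Disjoint ({x} : Finset (Fin 7)) (Jᶜ \ {b}) :=
      (disjoint_compl_right.mono hsub sdiff_le)
    have hd4 : Disjoint ({b} : Finset (Fin 7)) (J \ {x}) :=
      (disjoint_compl_left.mono hsub' sdiff_le)
    have hd5 : Disjoint ({b} : Finset (Fin 7)) (Jᶜ \ {b}) := disjoint_sdiff
    have hd6 : Disjoint (J \ {x}) (Jᶜ \ {b}) :=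
      (disjoint_compl_right.mono sdiff_le sdiff_le)
    have hun : ({x} : Finset (Fin 7)) ∪ {b} ∪ (J \ {x}) ∪ (Jᶜ \ {b}) = univ := by
      ext y
      simp only [mem_union, mem_singleton, mem_sdiff, mem_compl, mem_univ, iff_true]
      by_cases hy : y ∈ J
      · by_cases hyx : y = x
        · exact Or.inl (Or.inl (Or.inl hyx))
        · exact Or.inl (Or.inr ⟨hy, hyx⟩)
      · by_cases hyb : y = b
        · exact Or.inl (Or.inl (Or.inr hyb))
        · exact Or.inr ⟨hy, hyb⟩
    have hcC : (J \ {x}).card = 2 := by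
      rw [card_sdiff_of_subset hsub, hJ]; rfl
    have hcD : (Jᶜ \ {b}).card = 3 := by
      rw [card_sdiff_of_subset hsub', hK]; rfl
    have H := (hF {x} {b} (J \ {x}) (Jᶜ \ {b}) hd1 hd2 hd3 hd4 hd5 hd6 hun
      (singleton_nonempty x) (singleton_nonempty b)
      (card_pos.1 (by rw [hcC]; norm_num)) (card_pos.1 (by rw [hcD]; norm_num))).2.1
      ⟨rfl, rfl, hcC, hcD⟩
    have hfilt : univ.filter (fun I : Finset (Fin 7) => I.card = 4 ∧
        (I ∩ {x}).card = 1 ∧ (I ∩ {b}).card = 1 ∧ (I ∩ (J \ {x})).card = 1 ∧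
        (I ∩ (Jᶜ \ {b})).card = 1)
        = F.filter (fun I => x ∈ I ∧ b ∈ I) := by
      rw [hFdef, filter_filter]
      apply filter_congr
      intro I _
      simp only [hsing]
      constructor
      · rintro ⟨h4, hxI, hbI, hJx, hKb⟩
        have e1 : I ∩ (J \ {x}) = (I ∩ J) \ {x} := (inter_sdiff_assoc I J {x}).symm
        have e2 : {x} ⊆ I ∩ J := by simp [hxI, hx]
        have e3 : (1 : ℕ) ≤ (I ∩ J).card := card_le_card e2
        rw [e1, card_sdiff_of_subset e2, card_singleton] at hJx
        exact ⟨⟨h4, by omega⟩, hxI, hbI⟩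
      · rintro ⟨⟨h4, h2⟩, hxI, hbI⟩
        refine ⟨h4, hxI, hbI, ?_, ?_⟩
        · have e1 : I ∩ (J \ {x}) = (I ∩ J) \ {x} := (inter_sdiff_assoc I J {x}).symm
          have e2 : {x} ⊆ I ∩ J := by simp [hxI, hx]
          rw [e1, card_sdiff_of_subset e2, h2, card_singleton]
        · have e1 : I ∩ (Jᶜ \ {b}) = (I ∩ Jᶜ) \ {b} := (inter_sdiff_assoc I Jᶜ {b}).symm
          have e2 : {b} ⊆ I ∩ Jᶜ := by
            simp only [singleton_subset_iff, mem_inter, mem_compl]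
            exact ⟨hbI, hb'⟩
          rw [e1, card_sdiff_of_subset e2, hcompl I h4 h2, card_singleton]
    rw [hfilt, sum_filter] at H
    have hAB : ({x} : Finset (Fin 7)) ∪ {b} = {x, b} := rfl
    rw [hAB, sum_pair hxb] at H
    exact H
  have total : 0 ≤ ∑ x ∈ J, ∑ b ∈ Jᶜ,
      ((∑ I ∈ F, if x ∈ I ∧ b ∈ I then s I else 0)
          + (a + m) * (p x + p b)
          + (-a + m) * (∑ j ∈ J \ {x}, p j)
          + m * (∑ k ∈ Jᶜ \ {b}, p k)) :=
    Finset.sum_nonneg fun x hx => Finset.sum_nonneg fun b hb => key x hx b hb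
  set SJ := ∑ i ∈ J, p i with hSJ
  set SK := ∑ k ∈ Jᶜ, p k with hSK
  set Sig := ∑ I ∈ F, s I with hSig
  have hs : ∑ x ∈ J, ∑ b ∈ Jᶜ, (∑ I ∈ F, if x ∈ I ∧ b ∈ I then s I else 0)
      = 4 * Sig := by
    have swap1 : ∀ x : Fin 7, ∑ b ∈ Jᶜ, ∑ I ∈ F, (if x ∈ I ∧ b ∈ I then s I else 0)
        = ∑ I ∈ F, ∑ b ∈ Jᶜ, (if x ∈ I ∧ b ∈ I then s I else 0) :=
      fun x => Finset.sum_comm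
    rw [sum_congr rfl (fun x _ => swap1 x), Finset.sum_comm, hSig, mul_comm,
      Finset.sum_mul]
    apply sum_congr rfl
    intro I hI
    rw [hFdef, mem_filter] at hI
    obtain ⟨-, h4, h2⟩ := hI
    have h2' : (I ∩ Jᶜ).card = 2 := hcompl I h4 h2
    have step : ∀ x : Fin 7, ∑ b ∈ Jᶜ, (if x ∈ I ∧ b ∈ I then s I else 0)
        = if x ∈ I then 2 * s I else 0 := by
      intro x
      by_cases hxI : x ∈ I
      · simp only [hxI, true_and, if_pos hxI]
        rw [sum_ite_mem, sum_const, inter_comm, h2']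
        simp [nsmul_eq_mul]
      · simp [hxI]
    rw [sum_congr rfl (fun x _ => step x), sum_ite_mem, sum_const, inter_comm, h2]
    simp only [nsmul_eq_mul]
    push_cast
    ring
  have hp1 : ∑ x ∈ J, ∑ b ∈ Jᶜ, (a + m) * (p x + p b)
      = (a + m) * (4 * SJ + 3 * SK) := by
    simp only [← mul_sum]
    congr 1
    have inner : ∀ x : Fin 7, ∑ b ∈ Jᶜ, (p x + p b) = 4 * p x + SK := by
      intro x
      rw [sum_add_distrib, sum_const, hK, ← hSK]
      simp only [nsmul_eq_mul]
      push_cast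
      ring
    rw [sum_congr rfl (fun x _ => inner x), sum_add_distrib, sum_const, hJ, ← mul_sum,
      ← hSJ]
    simp only [nsmul_eq_mul]
    push_cast
    ring
  have hp2 : ∑ x ∈ J, ∑ b ∈ Jᶜ, (-a + m) * (∑ j ∈ J \ {x}, p j)
      = (-a + m) * (8 * SJ) := by
    have inner : ∀ x ∈ J, ∑ b ∈ Jᶜ, (-a + m) * (∑ j ∈ J \ {x}, p j)
        = 4 * ((-a + m) * (SJ - p x)) := by
      intro x hx
      rw [sum_const, hK, sum_sdiff_eq_sub (singleton_subset_iff.2 hx), sum_singleton,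
        ← hSJ]
      simp only [nsmul_eq_mul]
      push_cast
      ring
    rw [sum_congr rfl inner, ← mul_sum, ← mul_sum, sum_sub_distrib, sum_const, hJ,
      ← hSJ]
    simp only [nsmul_eq_mul]
    push_cast
    ring
  have hp3 : ∑ x ∈ J, ∑ b ∈ Jᶜ, m * (∑ k ∈ Jᶜ \ {b}, p k)
      = 9 * (m * SK) := by
    have inner_b : ∑ b ∈ Jᶜ, m * (∑ k ∈ Jᶜ \ {b}, p k) = m * (3 * SK) := by
      have e : ∀ b ∈ Jᶜ, m * (∑ k ∈ Jᶜ \ {b}, p k) = m * (SK - p b) := by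
        intro b hb
        rw [sum_sdiff_eq_sub (singleton_subset_iff.2 hb), sum_singleton, ← hSK]
      rw [sum_congr rfl e, ← mul_sum, sum_sub_distrib, sum_const, hK, ← hSK]
      simp only [nsmul_eq_mul]
      push_cast
      ring
    rw [sum_congr rfl (fun x (_ : x ∈ J) => inner_b), sum_const, hJ]
    simp only [nsmul_eq_mul]
    push_cast
    ring
  simp only [sum_add_distrib] at total
  rw [hs, hp1, hp2, hp3] at total
  have hcJ : cJ a l m s p J = (1/3) * Sig + m * (SJ + SK) := by
    rw [cJ, if_neg (by rw [hJ]; norm_num), ← hFdef, ← hSig, ← sum_add_sum_compl J p,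
      ← hSJ, ← hSK]
  rw [hcJ]
  linarith [total]
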